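/- arXiv:1108.0384 — 3 statements merged into one kernel-verified Lean document; each statement's English description precedes it below -/
import Mathlib

section
/- The exponential distribution with rate parameter λ > 0 on [0,∞) satisfies the Poincaré inequality with constant 4/λ²: for every continuously differentiable f with f, f' square integrable with respect to the measure, Var(f) ≤ (4/λ²) ∫₀^∞ |f'(x)|² λ e^{-λx} dx. -/
open MeasureTheory ProbabilityTheory Set Real Filter Topology
open scoped ENNReal NNReal

lemma pdfReal_eq (l x : ℝ) :
    exponentialPDFReal l x = if 0 ≤ x then l * Real.exp (-(l * x)) else 0 := by
  rw [exponentialPDFReal, gammaPDFReal]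
  simp only [rpow_one, Real.Gamma_one, div_one, sub_self, rpow_zero, mul_one]

lemma expMeasure_eq (l : ℝ) :
    expMeasure l = volume.withDensity fun x => ((exponentialPDFReal l x).toNNReal : ℝ≥0∞) := rfl

lemma smul_fun_eq {l : ℝ} (hl : 0 < l) (g : ℝ → ℝ) :
    (fun x => ((exponentialPDFReal l x).toNNReal : ℝ) • g x)
      = (Ici (0:ℝ)).indicator (fun x => g x * (l * Real.exp (-(l * x)))) := by
  funext x
  rw [smul_eq_mul, Real.coe_toNNReal', pdfReal_eq]
  by_cases hx : 0 ≤ x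
  · rw [if_pos hx, indicator_of_mem (mem_Ici.mpr hx), max_eq_left (by positivity)]
    ring
  · rw [if_neg hx, indicator_of_notMem (by simpa using hx)]
    simp

lemma integral_expM {l : ℝ} (hl : 0 < l) (g : ℝ → ℝ) :
    ∫ x, g x ∂(expMeasure l) = ∫ x in Ici (0:ℝ), g x * (l * Real.exp (-(l * x))) := by
  have hmeas : Measurable fun x => (exponentialPDFReal l x).toNNReal :=
    (measurable_exponentialPDFReal l).real_toNNReal
  rw [expMeasure_eq, integral_withDensity_eq_integral_smul hmeas,
    show (fun x => (exponentialPDFReal l x).toNNReal • g x)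
      = (Ici (0:ℝ)).indicator (fun x => g x * (l * Real.exp (-(l * x)))) from smul_fun_eq hl g,
    integral_indicator measurableSet_Ici]

lemma integrable_exp_iff {l : ℝ} (hl : 0 < l) (g : ℝ → ℝ) :
    Integrable g (expMeasure l) ↔
      IntegrableOn (fun x => g x * (l * Real.exp (-(l * x)))) (Ici (0:ℝ)) := by
  have hmeas : Measurable fun x => (exponentialPDFReal l x).toNNReal :=
    (measurable_exponentialPDFReal l).real_toNNReal
  rw [expMeasure_eq, integrable_withDensity_iff_integrable_coe_smul hmeas,
    show (fun x => ((exponentialPDFReal l x).toNNReal : ℝ) • g x)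
      = (Ici (0:ℝ)).indicator (fun x => g x * (l * Real.exp (-(l * x)))) from smul_fun_eq hl g,
    integrable_indicator_iff measurableSet_Ici]

lemma abs_mul_le_half (a b : ℝ) : |a * b| ≤ (a ^ 2 + b ^ 2) / 2 := by
  nlinarith [sq_nonneg (|a| - |b|), abs_mul a b, sq_abs a, sq_abs b]

/-- The exponential distribution with rate `l > 0` satisfies the Poincaré
inequality with constant `4 / l²`. -/
theorem exponential_poincare (l : ℝ) (hl : 0 < l) :
    ∀ f : ℝ → ℝ, ContDiff ℝ 1 f →
      MemLp f 2 (expMeasure l) → MemLp (deriv f) 2 (expMeasure l) →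
      (∫ x, f x ^ 2 ∂(expMeasure l)) - (∫ x, f x ∂(expMeasure l)) ^ 2 ≤
        (4 / l ^ 2) * ∫ x in Set.Ici (0 : ℝ),
          deriv f x ^ 2 * (l * Real.exp (-(l * x))) := by
  intro f hf hf2 hf'2
  have hprob : IsProbabilityMeasure (expMeasure l) := isProbabilityMeasure_expMeasure hl
  set μ := expMeasure l with hμ
  set c := f 0 with hc
  set g : ℝ → ℝ := fun x => f x - c with hgdef
  have hfc : Continuous f := hf.continuous
  have hf'c : Continuous (deriv f) := hf.continuous_deriv le_rfl
  have hgc : Continuous g := hfc.sub continuous_const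
  have hgd : ∀ x, HasDerivAt g (deriv f x) x := fun x =>
    ((hf.differentiable one_ne_zero x).hasDerivAt).sub_const c
  have hg0 : g 0 = 0 := sub_self c
  have hg2 : MemLp g 2 μ := hf2.sub (memLp_const c)
  have hIg2 : Integrable (fun x => g x ^ 2) μ := hg2.integrable_sq
  have hIf'2 : Integrable (fun x => deriv f x ^ 2) μ := hf'2.integrable_sq
  have hIgf' : Integrable (fun x => |g x * deriv f x|) μ := by
    have hbd : Integrable (fun x => (g x ^ 2 + deriv f x ^ 2) / 2) μ :=
      (hIg2.add hIf'2).div_const 2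
    refine Integrable.mono' hbd
      ((hgc.mul hf'c).abs.aestronglyMeasurable) (ae_of_all _ fun x => ?_)
    rw [Real.norm_eq_abs, abs_abs]
    exact abs_mul_le_half _ _
  set A := ∫ x, g x ^ 2 ∂μ with hA
  set B := ∫ x, deriv f x ^ 2 ∂μ with hB
  set D := ∫ x, |g x * deriv f x| ∂μ with hD
  have hA0 : 0 ≤ A := integral_nonneg fun x => sq_nonneg _
  have hB0 : 0 ≤ B := integral_nonneg fun x => sq_nonneg _
  have hD0 : 0 ≤ D := integral_nonneg fun x => abs_nonneg _
  -- continuity facts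
  have hcontW : Continuous (fun x : ℝ => l * Real.exp (-(l * x))) := by fun_prop
  have hconte : Continuous (fun x : ℝ => Real.exp (-(l * x))) := by fun_prop
  -- Step 1 : A ≤ 2/l * D
  have step1 : A ≤ 2 / l * D := by
    have hW : A = ∫ x in Ioi (0:ℝ), g x ^ 2 * (l * Real.exp (-(l * x))) := by
      rw [hA, integral_expM hl, integral_Ici_eq_integral_Ioi]
    have hIA : IntegrableOn (fun x => g x ^ 2 * (l * Real.exp (-(l * x)))) (Ioi (0:ℝ)) volume :=
      ((integrable_exp_iff hl _).mp hIg2).mono_set Ioi_subset_Ici_self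
    have hID : IntegrableOn (fun x => |g x * deriv f x| * (l * Real.exp (-(l * x))))
        (Ici (0:ℝ)) volume := (integrable_exp_iff hl _).mp hIgf'
    have hDset : D = ∫ x in Ici (0:ℝ), |g x * deriv f x| * (l * Real.exp (-(l * x))) :=
      integral_expM hl _
    have htend : Tendsto (fun T => ∫ x in (0:ℝ)..T, g x ^ 2 * (l * Real.exp (-(l * x)))) atTop
        (𝓝 (∫ x in Ioi (0:ℝ), g x ^ 2 * (l * Real.exp (-(l * x))))) :=
      intervalIntegral_tendsto_integral_Ioi 0 hIA tendsto_id
    have hbound : ∀ T : ℝ, 0 ≤ T →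
        ∫ x in (0:ℝ)..T, g x ^ 2 * (l * Real.exp (-(l * x))) ≤ 2 / l * D := by
      intro T hT
      have hFd : ∀ x : ℝ, HasDerivAt (fun y => -(g y ^ 2 * Real.exp (-(l * y))))
          (g x ^ 2 * (l * Real.exp (-(l * x))) - 2 * g x * deriv f x * Real.exp (-(l * x))) x := by
        intro x
        have hlin : HasDerivAt (fun y : ℝ => -(l * y)) (-(l * 1)) x :=
          ((hasDerivAt_id x).const_mul l).neg
        have hexp : HasDerivAt (fun y : ℝ => Real.exp (-(l * y)))
            (Real.exp (-(l * x)) * -(l * 1)) x := hlin.exp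
        have hpow : HasDerivAt (fun y => g y ^ 2) (2 * g x ^ 1 * deriv f x) x := (hgd x).pow 2
        have : HasDerivAt (fun y => -(g y ^ 2 * Real.exp (-(l * y))))
            (-(2 * g x ^ 1 * deriv f x * Real.exp (-(l * x))
              + g x ^ 2 * (Real.exp (-(l * x)) * -(l * 1)))) x := (hpow.mul hexp).neg
        convert this using 1
        ring
      have hcont1 : Continuous (fun x => g x ^ 2 * (l * Real.exp (-(l * x)))) :=
        (hgc.pow 2).mul hcontW
      have hcont2 : Continuous (fun x => 2 * g x * deriv f x * Real.exp (-(l * x))) := by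
        fun_prop
      have hcont3 : Continuous (fun x => 2 / l * (|g x * deriv f x| * (l * Real.exp (-(l * x))))) := by
        fun_prop
      have hftc : ∫ x in (0:ℝ)..T,
          (g x ^ 2 * (l * Real.exp (-(l * x))) - 2 * g x * deriv f x * Real.exp (-(l * x)))
          = -(g T ^ 2 * Real.exp (-(l * T))) - -(g 0 ^ 2 * Real.exp (-(l * 0))) :=
        intervalIntegral.integral_eq_sub_of_hasDerivAt (fun x _ => hFd x)
          ((hcont1.sub hcont2).intervalIntegrable 0 T)
      have hsplit : ∫ x in (0:ℝ)..T,
          (g x ^ 2 * (l * Real.exp (-(l * x))) - 2 * g x * deriv f x * Real.exp (-(l * x)))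
          = (∫ x in (0:ℝ)..T, g x ^ 2 * (l * Real.exp (-(l * x))))
            - ∫ x in (0:ℝ)..T, 2 * g x * deriv f x * Real.exp (-(l * x)) :=
        intervalIntegral.integral_sub (hcont1.intervalIntegrable 0 T)
          (hcont2.intervalIntegrable 0 T)
      have hmono : ∫ x in (0:ℝ)..T, 2 * g x * deriv f x * Real.exp (-(l * x)) ≤
          ∫ x in (0:ℝ)..T, 2 / l * (|g x * deriv f x| * (l * Real.exp (-(l * x)))) := by
        refine intervalIntegral.integral_mono_on hT (hcont2.intervalIntegrable 0 T)
          (hcont3.intervalIntegrable 0 T) (fun x _ => ?_)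
        have h1 : 0 < Real.exp (-(l * x)) := Real.exp_pos _
        have h2 : g x * deriv f x ≤ |g x * deriv f x| := le_abs_self _
        have heq : 2 / l * (|g x * deriv f x| * (l * Real.exp (-(l * x))))
            = 2 * |g x * deriv f x| * Real.exp (-(l * x)) := by
          field_simp
        rw [heq]
        nlinarith [mul_le_mul_of_nonneg_right h2 h1.le]
      have hmono2 : ∫ x in (0:ℝ)..T, 2 / l * (|g x * deriv f x| * (l * Real.exp (-(l * x))))
          ≤ 2 / l * D := by
        rw [intervalIntegral.integral_const_mul, hDset]
        refine mul_le_mul_of_nonneg_left ?_ (by positivity)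
        rw [intervalIntegral.integral_of_le hT]
        refine setIntegral_mono_set hID (ae_of_all _ fun x => by positivity) ?_
        exact HasSubset.Subset.eventuallyLE (Ioc_subset_Ioi_self.trans Ioi_subset_Ici_self)
      have hT0 : -(g T ^ 2 * Real.exp (-(l * T))) - -(g 0 ^ 2 * Real.exp (-(l * 0))) ≤ 0 := by
        rw [hg0]
        nlinarith [sq_nonneg (g T), (Real.exp_pos (-(l * T))).le]
      linarith [hftc, hsplit, hmono, hmono2]
    rw [hW]
    exact le_of_tendsto htend ((eventually_ge_atTop (0:ℝ)).mono hbound)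
  -- Step 2 : D ≤ sqrt A * sqrt B  (Cauchy-Schwarz)
  have step2 : D ≤ Real.sqrt A * Real.sqrt B := by
    have hpq : Real.HolderConjugate 2 2 := ⟨by norm_num, by norm_num, by norm_num⟩
    have h2 : ENNReal.ofReal (2:ℝ) = (2 : ℝ≥0∞) := by norm_num
    have hgabs : MemLp (fun x => |g x|) (ENNReal.ofReal (2:ℝ)) μ := by
      rw [h2]; exact hg2.abs
    have hf'abs : MemLp (fun x => |deriv f x|) (ENNReal.ofReal (2:ℝ)) μ := by
      rw [h2]; exact hf'2.abs
    have hCS := integral_mul_le_Lp_mul_Lq_of_nonneg hpq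
      (ae_of_all _ fun x => abs_nonneg (g x)) (ae_of_all _ fun x => abs_nonneg (deriv f x))
      hgabs hf'abs
    have e1 : ∫ x, |g x| * |deriv f x| ∂μ = D := by
      rw [hD]; congr 1; funext x; rw [abs_mul]
    have e2 : ∫ x, |g x| ^ (2:ℝ) ∂μ = A := by
      rw [hA]; congr 1; funext x
      rw [show ((2:ℝ)) = ((2:ℕ):ℝ) by norm_num, Real.rpow_natCast, sq_abs]
    have e3 : ∫ x, |deriv f x| ^ (2:ℝ) ∂μ = B := by
      rw [hB]; congr 1; funext x
      rw [show ((2:ℝ)) = ((2:ℕ):ℝ) by norm_num, Real.rpow_natCast, sq_abs]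
    rw [e1, e2, e3] at hCS
    calc D ≤ A ^ ((1:ℝ)/2) * B ^ ((1:ℝ)/2) := hCS
    _ = Real.sqrt A * Real.sqrt B := by rw [← Real.sqrt_eq_rpow, ← Real.sqrt_eq_rpow]
  -- Step 3 : A ≤ 4 / l ^ 2 * B
  have step3 : A ≤ 4 / l ^ 2 * B := by
    have key : l * A ≤ 2 * (Real.sqrt A * Real.sqrt B) := by
      have := mul_le_mul_of_nonneg_left step1 hl.le
      have h2 : l * (2 / l * D) = 2 * D := by field_simp
      nlinarith [mul_le_mul_of_nonneg_left step2 (by norm_num : (0:ℝ) ≤ 2)]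
    have hl2 : (0:ℝ) < l ^ 2 := by positivity
    have h4 : l ^ 2 * A ≤ 4 * B := by
      nlinarith [Real.sq_sqrt hA0, Real.sq_sqrt hB0, Real.sqrt_nonneg A, Real.sqrt_nonneg B,
        sq_nonneg (l * Real.sqrt A - 2 * Real.sqrt B), key,
        mul_le_mul_of_nonneg_left key hl.le]
    rw [div_mul_eq_mul_div, le_div_iff₀ hl2]
    linarith
  -- Step 4 : variance ≤ A
  have hIf : Integrable f μ := hf2.integrable one_le_two
  have hIf2 : Integrable (fun x => f x ^ 2) μ := hf2.integrable_sq
  have hexp : A = (∫ x, f x ^ 2 ∂μ) - 2 * c * (∫ x, f x ∂μ) + c ^ 2 := by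
    have hfun : (fun x => g x ^ 2) = fun x => f x ^ 2 - 2 * c * f x + c ^ 2 := by
      funext x; simp only [hgdef]; ring
    have h1 : Integrable (fun x => f x ^ 2 - 2 * c * f x) μ := hIf2.sub (hIf.const_mul _)
    rw [hA, hfun, integral_add h1 (integrable_const _),
      integral_sub hIf2 (hIf.const_mul (2 * c)), integral_const_mul, integral_const]
    simp
  have step4 : (∫ x, f x ^ 2 ∂μ) - (∫ x, f x ∂μ) ^ 2 ≤ A := by
    rw [hexp]; nlinarith [sq_nonneg ((∫ x, f x ∂μ) - c)]
  have hBset : (∫ x in Set.Ici (0:ℝ), deriv f x ^ 2 * (l * Real.exp (-(l * x)))) = B :=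
    (integral_expM hl _).symm
  rw [hBset]
  exact le_trans step4 step3
end

section
/- Let f: (ℝ₊)^{n−1} → ℝ be continuously differentiable and define g: ℝⁿ → ℝ by g(x) = f(x₂−x₁, …, x_n−x_{n−1}). Then at every point, ‖∇_y f‖² ≤ λ_n ‖∇_x g‖², where λ_n = 1/(2−2cos(π/n)) and the gradients are evaluated at corresponding points y = (x₂−x₁,…,x_n−x_{n−1}). -/
open Real Finset

lemma sin_pair (x θ : ℝ) : Real.sin (x - θ) + Real.sin (x + θ) = 2 * Real.sin x * Real.cos θ := by
  rw [Real.sin_sub, Real.sin_add]; ring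

lemma amgm (p q a b : ℝ) (hp : 0 < p) (hq : 0 < q) :
    2 * (a * b) ≤ (q / p) * a ^ 2 + (p / q) * b ^ 2 := by
  rw [div_mul_eq_mul_div, div_mul_eq_mul_div, div_add_div _ _ (ne_of_gt hp) (ne_of_gt hq),
    le_div_iff₀ (mul_pos hp hq)]
  nlinarith [sq_nonneg (q * a - p * b)]

lemma core (m : ℕ) (hm : 1 ≤ m) (v : ℕ → ℝ) (hv : v m = 0) :
    (2 - 2 * Real.cos (Real.pi / (m + 1))) * ∑ i ∈ range m, v i ^ 2 ≤
      v 0 ^ 2 + ∑ j ∈ range m, (v j - v (j + 1)) ^ 2 := by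
  set θ := Real.pi / (m + 1) with hθ
  have hmπ : ((m : ℝ) + 1) * θ = Real.pi := by
    rw [hθ]; field_simp
  have hθpos : 0 < θ := div_pos Real.pi_pos (by positivity)
  have hsin : ∀ k : ℕ, 1 ≤ k → k ≤ m → 0 < Real.sin (k * θ) := by
    intro k hk1 hkm
    apply Real.sin_pos_of_pos_of_lt_pi
    · have : (1:ℝ) ≤ (k:ℝ) := by exact_mod_cast hk1
      nlinarith
    · have hk : (k:ℝ) ≤ m := by exact_mod_cast hkm
      nlinarith
  set t : ℕ → ℝ := fun i => Real.sin (((i:ℝ) + 1) * θ) with ht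
  have htpos : ∀ i : ℕ, i + 1 ≤ m → 0 < t i := by
    intro i hi
    have := hsin (i + 1) (by omega) hi
    simpa [ht] using this
  -- Step 1 : rewrite RHS
  have e1 : ∑ j ∈ range m, (v j - v (j + 1)) ^ 2 =
      (∑ j ∈ range m, v j ^ 2) - 2 * (∑ j ∈ range m, v j * v (j + 1))
        + ∑ j ∈ range m, v (j + 1) ^ 2 := by
    rw [Finset.mul_sum, ← Finset.sum_sub_distrib, ← Finset.sum_add_distrib]
    exact Finset.sum_congr rfl fun j _ => by ring
  have e2 : ∑ j ∈ range m, v (j + 1) ^ 2 = (∑ i ∈ range m, v i ^ 2) - v 0 ^ 2 := by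
    have h1 := Finset.sum_range_succ' (fun i => v i ^ 2) m
    have h2 := Finset.sum_range_succ (fun i => v i ^ 2) m
    rw [hv] at h2
    simp at h2
    linarith [h1, h2]
  have e3 : ∑ j ∈ range m, v j * v (j + 1) = ∑ j ∈ range (m - 1), v j * v (j + 1) := by
    have hmm : m - 1 + 1 = m := Nat.succ_pred_eq_of_pos hm
    conv_lhs => rw [← hmm]
    rw [Finset.sum_range_succ, hmm, hv, mul_zero, add_zero]
  -- Step 2 : AM-GM on cross terms
  have step2 : 2 * (∑ j ∈ range (m - 1), v j * v (j + 1)) ≤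
      ∑ j ∈ range (m - 1), ((t (j + 1) / t j) * v j ^ 2 + (t j / t (j + 1)) * v (j + 1) ^ 2) := by
    rw [Finset.mul_sum]
    apply Finset.sum_le_sum
    intro j hj
    rw [Finset.mem_range] at hj
    exact amgm (t j) (t (j + 1)) (v j) (v (j + 1)) (htpos j (by omega)) (htpos (j + 1) (by omega))
  -- Step 3-5 : coefficient identity
  set G : ℕ → ℝ := fun i => (if i = 0 then 0 else t (i - 1) / t i) * v i ^ 2 with hG
  set H : ℕ → ℝ := fun i => (if i + 1 = m then 0 else t (i + 1) / t i) * v i ^ 2 with hH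
  have hmm : m - 1 + 1 = m := Nat.succ_pred_eq_of_pos hm
  have claimA : ∑ j ∈ range (m - 1), (t (j + 1) / t j) * v j ^ 2 = ∑ i ∈ range m, H i := by
    conv_rhs => rw [← hmm]
    rw [Finset.sum_range_succ]
    have : H (m - 1) = 0 := by simp [hH, hmm]
    rw [this, add_zero]
    apply Finset.sum_congr rfl
    intro j hj
    rw [Finset.mem_range] at hj
    simp only [hH]
    rw [if_neg (by omega)]
  have claimB : ∑ j ∈ range (m - 1), (t j / t (j + 1)) * v (j + 1) ^ 2 = ∑ i ∈ range m, G i := by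
    conv_rhs => rw [← hmm]
    rw [Finset.sum_range_succ' G (m - 1)]
    have : G 0 = 0 := by simp [hG]
    rw [this, add_zero]
    apply Finset.sum_congr rfl
    intro j hj
    simp only [hG]
    rw [if_neg (by omega)]
    norm_num
  have claimC : ∀ i ∈ range m, H i + G i = 2 * Real.cos θ * v i ^ 2 := by
    intro i hi
    rw [Finset.mem_range] at hi
    rcases Nat.eq_zero_or_pos i with h0 | h0
    · subst h0
      simp only [hG, hH, if_pos rfl, zero_mul, add_zero]
      split_ifs with h1
      · have hc : Real.cos θ = 0 := by
          have : θ = Real.pi / 2 := by rw [hθ, ← h1]; norm_num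
          rw [this, Real.cos_pi_div_two]
        rw [hc]; ring
      · have ht0 : 0 < t 0 := htpos 0 hm
        have key : t 1 = 2 * Real.cos θ * t 0 := by
          simp only [ht]
          push_cast
          rw [show ((1:ℝ) + 1) * θ = 2 * θ by ring, Real.sin_two_mul]
          ring
        field_simp [ne_of_gt ht0]
        linear_combination v 0 ^ 2 * key
    · obtain ⟨k, rfl⟩ : ∃ k, i = k + 1 := ⟨i - 1, by omega⟩
      simp only [hG, hH, if_neg (Nat.succ_ne_zero k), Nat.add_sub_cancel]
      have htk1 : 0 < t (k + 1) := htpos (k + 1) (by omega)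
      split_ifs with h1
      · have key : t k = 2 * Real.cos θ * t (k + 1) := by
          simp only [ht]
          have hm' : (m:ℝ) = (k:ℝ) + 2 := by exact_mod_cast h1.symm
          have hz : Real.sin (((k:ℝ) + 2) * θ + θ) = 0 := by
            rw [show ((k:ℝ) + 2) * θ + θ = ((m:ℝ) + 1) * θ by rw [hm']; ring, hmπ, Real.sin_pi]
          have h2 := sin_pair (((k:ℝ) + 2) * θ) θ
          rw [hz, show ((k:ℝ) + 2) * θ - θ = ((k:ℝ) + 1) * θ by ring] at h2
          push_cast
          rw [show ((k:ℝ) + 1 + 1) = (k:ℝ) + 2 by ring]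
          linear_combination h2
        field_simp [ne_of_gt htk1]
        linear_combination v (k + 1) ^ 2 * key
      · have key : t k + t (k + 2) = 2 * Real.cos θ * t (k + 1) := by
          simp only [ht]
          have h2 := sin_pair (((k:ℝ) + 2) * θ) θ
          rw [show ((k:ℝ) + 2) * θ - θ = ((k:ℝ) + 1) * θ by ring,
            show ((k:ℝ) + 2) * θ + θ = ((k:ℝ) + 2 + 1) * θ by ring] at h2
          push_cast
          rw [show ((k:ℝ) + 1 + 1) = (k:ℝ) + 2 by ring]
          linear_combination h2
        field_simp [ne_of_gt htk1]
        linear_combination v (k + 1) ^ 2 * key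
  -- Combine
  have step5 : ∑ j ∈ range (m - 1), ((t (j + 1) / t j) * v j ^ 2 + (t j / t (j + 1)) * v (j + 1) ^ 2)
      = 2 * Real.cos θ * ∑ i ∈ range m, v i ^ 2 := by
    rw [Finset.sum_add_distrib, claimA, claimB, ← Finset.sum_add_distrib, Finset.mul_sum]
    exact Finset.sum_congr rfl claimC
  rw [e1, e2, e3]
  have := step2
  rw [step5] at this
  linarith

open RealInnerProductSpace

lemma inner_gradient {F : Type*} [NormedAddCommGroup F] [InnerProductSpace ℝ F] [CompleteSpace F]
    (f : F → ℝ) (x u : F) : ⟪gradient f x, u⟫ = fderiv ℝ f x u := by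
  unfold gradient
  rw [← InnerProductSpace.toDual_apply_apply, LinearIsometryEquiv.apply_symm_apply]

set_option maxHeartbeats 1000000 in
/-- Chain-rule gradient comparison for the spacings map: if
`g(x) = f(x₂−x₁, …, x_n−x_{n−1})` with `f` continuously differentiable, then at
every point `‖∇f(y)‖² ≤ λ_n ‖∇g(x)‖²` with `y = (x₂−x₁,…,x_n−x_{n−1})` and
`λ_n = 1/(2−2cos(π/n))` (here `n = m+1`). -/
theorem gradient_spacings_bound (m : ℕ) (hm : 1 ≤ m)
    (f : EuclideanSpace ℝ (Fin m) → ℝ) (hf : ContDiff ℝ 1 f)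
    (D : EuclideanSpace ℝ (Fin (m + 1)) → EuclideanSpace ℝ (Fin m))
    (hD : ∀ x i, D x i = x i.succ - x i.castSucc)
    (x : EuclideanSpace ℝ (Fin (m + 1))) :
    ‖gradient f (D x)‖ ^ 2 ≤
      (1 / (2 - 2 * Real.cos (Real.pi / (m + 1)))) * ‖gradient (f ∘ D) x‖ ^ 2 := by
  classical
  -- D is a continuous linear map
  let Llin : EuclideanSpace ℝ (Fin (m + 1)) →ₗ[ℝ] EuclideanSpace ℝ (Fin m) :=
    { toFun := D
      map_add' := by
        intro a b; ext i
        simp only [hD, PiLp.add_apply]; ring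
      map_smul' := by
        intro c a; ext i
        simp only [hD, PiLp.smul_apply, smul_eq_mul, RingHom.id_apply]; ring }
  let L := LinearMap.toContinuousLinearMap Llin
  have hDL : D = ⇑L := rfl
  have hfd : DifferentiableAt ℝ f (D x) := (hf.differentiable one_ne_zero).differentiableAt
  have hgd : fderiv ℝ (f ∘ D) x = (fderiv ℝ f (D x)).comp L := by
    rw [hDL]
    rw [fderiv_comp x (by rw [← hDL]; exact hfd) L.differentiableAt, L.fderiv]
  set v := gradient f (D x) with hv
  set w := gradient (f ∘ D) x with hwdef
  have hwj : ∀ j : Fin (m + 1), w j = ∑ i : Fin m, v i * (D (EuclideanSpace.single j 1) i) := by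
    intro j
    have h1 : w j = ⟪w, EuclideanSpace.single j 1⟫ := by
      simp [PiLp.inner_apply, EuclideanSpace.single_apply, mul_ite, mul_one, mul_zero]
    rw [h1, hwdef, inner_gradient, hgd, ContinuousLinearMap.comp_apply, ← inner_gradient]
    rw [PiLp.inner_apply]
    simp only [RCLike.inner_apply, conj_trivial]
    exact Finset.sum_congr rfl fun i _ => mul_comm _ _
  set V : ℕ → ℝ := fun k => if h : k < m then v ⟨k, h⟩ else 0 with hV
  have hw2 : ∀ j : Fin (m + 1), w j = (if (j : ℕ) = 0 then 0 else V ((j : ℕ) - 1)) - V (j : ℕ) := by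
    intro j
    rw [hwj j]
    have hD1 : ∀ i : Fin m, D (EuclideanSpace.single j 1) i
        = (if i.succ = j then (1:ℝ) else 0) - (if i.castSucc = j then (1:ℝ) else 0) := by
      intro i
      rw [hD]
      simp [EuclideanSpace.single_apply]
    have hsplit : ∑ i : Fin m, v i * (D (EuclideanSpace.single j 1) i)
        = (∑ i : Fin m, if i.succ = j then v i else 0)
          - (∑ i : Fin m, if i.castSucc = j then v i else 0) := by
      rw [← Finset.sum_sub_distrib]
      apply Finset.sum_congr rfl
      intro i _
      rw [hD1 i]
      split_ifs <;> ring
    rw [hsplit]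
    congr 1
    · by_cases hj : (j : ℕ) = 0
      · rw [if_pos hj]
        apply Finset.sum_eq_zero
        intro i _
        rw [if_neg]
        intro hc
        have := congrArg Fin.val hc
        simp [Fin.val_succ, hj] at this
      · rw [if_neg hj]
        have hj1 : (j : ℕ) - 1 < m := by have := j.isLt; omega
        have hVe : V ((j : ℕ) - 1) = v ⟨(j : ℕ) - 1, hj1⟩ := by
          rw [hV]; simp [hj1]
        rw [hVe]
        rw [Finset.sum_congr rfl (g := fun i => if i = ⟨(j : ℕ) - 1, hj1⟩ then v i else 0)
          (fun i _ => by
            apply if_congr _ rfl rfl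
            have hmk : ((⟨(j : ℕ) - 1, hj1⟩ : Fin m) : ℕ) = (j : ℕ) - 1 := rfl
            rw [Fin.ext_iff, Fin.ext_iff, Fin.val_succ, hmk]
            omega)]
        rw [Finset.sum_ite_eq' Finset.univ _ v]
        simp
    · by_cases hj : (j : ℕ) < m
      · have hVe : V (j : ℕ) = v ⟨(j : ℕ), hj⟩ := by rw [hV]; simp [hj]
        rw [hVe]
        rw [Finset.sum_congr rfl (g := fun i => if i = ⟨(j : ℕ), hj⟩ then v i else 0)
          (fun i _ => by
            apply if_congr _ rfl rfl
            have hmk : ((⟨(j : ℕ), hj⟩ : Fin m) : ℕ) = (j : ℕ) := rfl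
            rw [Fin.ext_iff, Fin.ext_iff, Fin.coe_castSucc, hmk]
            try omega)]
        rw [Finset.sum_ite_eq' Finset.univ _ v]
        simp
      · have hVe : V (j : ℕ) = 0 := by rw [hV]; simp [hj]
        rw [hVe]
        apply Finset.sum_eq_zero
        intro i _
        rw [if_neg]
        intro hc
        have := congrArg Fin.val hc
        rw [Fin.coe_castSucc] at this
        have := i.isLt
        omega
  -- norms as sums
  have hnv : ‖v‖ ^ 2 = ∑ k ∈ Finset.range m, V k ^ 2 := by
    rw [EuclideanSpace.norm_eq, Real.sq_sqrt (by positivity)]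
    rw [← Fin.sum_univ_eq_sum_range (fun k => V k ^ 2) m]
    apply Finset.sum_congr rfl
    intro i _
    rw [hV]
    simp [i.isLt, Real.norm_eq_abs, sq_abs]
  set Wf : ℕ → ℝ := fun k => (if k = 0 then 0 else V (k - 1)) - V k with hWf
  have hnw : ‖w‖ ^ 2 = ∑ k ∈ Finset.range (m + 1), Wf k ^ 2 := by
    rw [EuclideanSpace.norm_eq, Real.sq_sqrt (by positivity)]
    rw [← Fin.sum_univ_eq_sum_range (fun k => Wf k ^ 2) (m + 1)]
    apply Finset.sum_congr rfl
    intro j _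
    rw [Real.norm_eq_abs, sq_abs, hw2 j]
  -- apply core inequality
  have hVm : V m = 0 := by rw [hV]; simp
  have hcore := core m hm V hVm
  have hWsum : ∑ k ∈ Finset.range (m + 1), Wf k ^ 2
      = V 0 ^ 2 + ∑ j ∈ Finset.range m, (V j - V (j + 1)) ^ 2 := by
    rw [Finset.sum_range_succ' (fun k => Wf k ^ 2) m]
    have h0 : Wf 0 ^ 2 = V 0 ^ 2 := by rw [hWf]; simp
    have h1 : ∀ j, Wf (j + 1) = V j - V (j + 1) := by
      intro j; rw [hWf]; simp
    rw [h0]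
    rw [Finset.sum_congr rfl (fun j _ => by rw [h1 j])]
    ring
  have hμ : 0 < 2 - 2 * Real.cos (Real.pi / (m + 1)) := by
    have hθpos : 0 < Real.pi / (m + 1) := div_pos Real.pi_pos (by positivity)
    have hθle : Real.pi / (m + 1) < 2 * Real.pi := by
      have h1 : Real.pi / (m + 1) ≤ Real.pi := by
        rw [div_le_iff₀ (by positivity : (0:ℝ) < (m:ℝ) + 1)]
        nlinarith [Real.pi_pos, (Nat.cast_nonneg m : (0:ℝ) ≤ (m:ℝ))]
      nlinarith [Real.pi_pos]
    have hne : Real.cos (Real.pi / (m + 1)) ≠ 1 := by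
      intro h
      rw [Real.cos_eq_one_iff_of_lt_of_lt (by nlinarith [Real.pi_pos]) hθle] at h
      linarith
    have := Real.cos_le_one (Real.pi / (m + 1))
    rcases lt_or_eq_of_le this with h | h
    · linarith
    · exact absurd h hne
  have hmain : (2 - 2 * Real.cos (Real.pi / (m + 1))) * ‖v‖ ^ 2 ≤ ‖w‖ ^ 2 := by
    rw [hnv, hnw, hWsum]
    exact hcore
  calc ‖v‖ ^ 2 = (1 / (2 - 2 * Real.cos (Real.pi / (m + 1))))
        * ((2 - 2 * Real.cos (Real.pi / (m + 1))) * ‖v‖ ^ 2) := by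
        rw [← mul_assoc, one_div_mul_cancel hμ.ne', one_mul]
    _ ≤ (1 / (2 - 2 * Real.cos (Real.pi / (m + 1)))) * ‖w‖ ^ 2 := by
        apply mul_le_mul_of_nonneg_left hmain (by positivity)
end

section
/- Let x₁, …, x_n ∈ [0,1] with Σᵢ xᵢ = 1. Then 0 ≤ (Σᵢ xᵢ² − 2Σᵢ xᵢ³ + (Σᵢ xᵢ²)²) / (2 − Σᵢ (xᵢ − 1/n)²) ≤ 2/(2 − (1 − 1/n)²). -/
open Finset

/-- Pointwise bound on the drift of the portfolio generated by the quadratic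
Gini coefficient: for market weights `x` in the simplex,
`0 ≤ (Σxᵢ² − 2Σxᵢ³ + (Σxᵢ²)²)/(2 − Σ(xᵢ−1/n)²) ≤ 2/(2 − (1−1/n)²)`. -/
theorem gini_drift_bounds (n : ℕ) (x : Fin n → ℝ)
    (hx : ∀ i, x i ∈ Set.Icc (0 : ℝ) 1) (hsum : ∑ i, x i = 1) :
    0 ≤ ((∑ i, x i ^ 2) - 2 * (∑ i, x i ^ 3) + (∑ i, x i ^ 2) ^ 2) /
        (2 - ∑ i, (x i - 1 / n) ^ 2) ∧
      ((∑ i, x i ^ 2) - 2 * (∑ i, x i ^ 3) + (∑ i, x i ^ 2) ^ 2) /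
          (2 - ∑ i, (x i - 1 / n) ^ 2) ≤
        2 / (2 - (1 - 1 / (n : ℝ)) ^ 2) := by
  rcases Nat.eq_zero_or_pos n with hn | hn
  · subst hn; simp at hsum
  have hn0 : (0 : ℝ) < n := by exact_mod_cast hn
  have hn1 : (1 : ℝ) ≤ n := by exact_mod_cast hn
  have hinv0 : 0 < 1 / (n : ℝ) := by positivity
  have hinv1 : 1 / (n : ℝ) ≤ 1 := by
    rw [div_le_one hn0]; exact hn1
  have hxnn : ∀ i, 0 ≤ x i := fun i => (hx i).1
  have hx1 : ∀ i, x i ≤ 1 := fun i => (hx i).2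
  set A := ∑ i, x i ^ 2 with hA
  set C := ∑ i, x i ^ 3 with hC
  have hA0 : 0 ≤ A := Finset.sum_nonneg fun i _ => sq_nonneg _
  have hA1 : A ≤ 1 := by
    rw [hA, ← hsum]
    exact Finset.sum_le_sum fun i _ => by nlinarith [hxnn i, hx1 i]
  -- the variance sum equals A - 1/n
  have hS : (∑ i, (x i - 1 / (n : ℝ)) ^ 2) = A - 1 / n := by
    have h1 : ∀ i : Fin n, (x i - 1 / (n : ℝ)) ^ 2
        = x i ^ 2 - (2 / n) * x i + 1 / (n : ℝ) ^ 2 := by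
      intro i; ring
    rw [Finset.sum_congr rfl fun i _ => h1 i]
    rw [Finset.sum_add_distrib, Finset.sum_sub_distrib, ← Finset.mul_sum, hsum,
      Finset.sum_const, Finset.card_univ, Fintype.card_fin, nsmul_eq_mul, hA]
    field_simp
    ring
  -- Cauchy-Schwarz : A^2 ≤ C
  have hCS : A ^ 2 ≤ C := by
    have h := Finset.sum_mul_sq_le_sq_mul_sq Finset.univ
      (fun i => Real.sqrt (x i)) (fun i => Real.sqrt (x i) * x i)
    have e1 : (∑ i, Real.sqrt (x i) * (Real.sqrt (x i) * x i)) = A := by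
      rw [hA]
      refine Finset.sum_congr rfl fun i _ => ?_
      rw [← mul_assoc, Real.mul_self_sqrt (hxnn i)]; ring
    have e2 : (∑ i, Real.sqrt (x i) ^ 2) = 1 := by
      rw [← hsum]
      exact Finset.sum_congr rfl fun i _ => Real.sq_sqrt (hxnn i)
    have e3 : (∑ i, (Real.sqrt (x i) * x i) ^ 2) = C := by
      rw [hC]
      refine Finset.sum_congr rfl fun i _ => ?_
      rw [mul_pow, Real.sq_sqrt (hxnn i)]; ring
    rw [e1, e2, e3, one_mul] at h
    exact h
  -- Σ x^4 ≤ A^2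
  have hD : (∑ i, x i ^ 4) ≤ A ^ 2 := by
    have h := Finset.sum_sq_le_sq_sum_of_nonneg (s := Finset.univ)
      (f := fun i => x i ^ 2) (fun i _ => sq_nonneg (x i))
    simpa [← pow_mul, hA] using h
  -- termwise nonnegativity : A - 2C + Σ x^4 ≥ 0
  have hterm : 0 ≤ A - 2 * C + ∑ i, x i ^ 4 := by
    have h : 0 ≤ ∑ i, (x i ^ 2 - 2 * x i ^ 3 + x i ^ 4) :=
      Finset.sum_nonneg fun i _ => by nlinarith [sq_nonneg (x i * (1 - x i))]
    have e : (∑ i, (x i ^ 2 - 2 * x i ^ 3 + x i ^ 4))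
        = A - 2 * C + ∑ i, x i ^ 4 := by
      rw [hA, hC, Finset.sum_add_distrib, Finset.sum_sub_distrib, Finset.mul_sum]
    linarith [e ▸ h]
  have hnum : 0 ≤ A - 2 * C + A ^ 2 := by linarith
  have hden : 0 < 2 - ∑ i, (x i - 1 / (n : ℝ)) ^ 2 := by
    rw [hS]; linarith
  constructor
  · exact div_nonneg hnum hden.le
  · have hle1 : (A - 2 * C + A ^ 2) / (2 - ∑ i, (x i - 1 / (n : ℝ)) ^ 2) ≤ 1 := by
      rw [div_le_one hden, hS]
      nlinarith
    have hd2 : 0 < 2 - (1 - 1 / (n : ℝ)) ^ 2 := by nlinarith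
    have hge1 : (1 : ℝ) ≤ 2 / (2 - (1 - 1 / (n : ℝ)) ^ 2) := by
      rw [le_div_iff₀ hd2]; nlinarith
    linarith
end
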